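/- Let c be differentiable on (0,1), and for 0 < β, β' < 1 with Δβ = β' − β, β̄ = (β+β')/2, let α_{β,β'} = E_{π^{(β)}}[exp(−max{0, Δβ·V − (c(β')−c(β))})] be the average tempering acceptance probability. Then α_{β,β'} = E_{π^{(β̄)}}[exp(−|Δβ|·|c'(β̌) − V|/2)] / E_{π^{(β̄)}}[exp(−Δβ·(c'(β̌) − V)/2)], where β̌ between β and β' satisfies c'(β̌) = (c(β') − c(β))/Δβ (mean value theorem); in particular α_{β,β'} ≤ 1. -/

import Mathlib

open MeasureTheory Real Set

/-- Ratio representation of the average tempering acceptance probability: for differentiable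
`c` on `(0,1)` and `β ≠ β'` in `(0,1)`, with `Δβ = β' − β`, `β̄ = (β+β')/2`, and any `β̌`
strictly between `β` and `β'` with `c'(β̌) = (c(β')−c(β))/Δβ` (mean value theorem),
`α_{β,β'} = E_{π^{(β̄)}}[e^{−|Δβ||c'(β̌)−V|/2}] / E_{π^{(β̄)}}[e^{−Δβ(c'(β̌)−V)/2}]`,
and in particular `α_{β,β'} ≤ 1`. Expectations under `π^{(b)}` are written as
`Z(b)⁻¹ ∫ f(V) e^{−bV} dμ`. -/
theorem acceptance_probability_ratio_representation
    {𝒳 : Type*} [MeasurableSpace 𝒳] (μ : Measure 𝒳) [IsProbabilityMeasure μ]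
    (V : 𝒳 → ℝ) (hV : Measurable V)
    (hint : ∀ b ∈ Set.Icc (0 : ℝ) 1, Integrable (fun x => Real.exp (-b * V x)) μ)
    (Z : ℝ → ℝ) (hZdef : ∀ b : ℝ, Z b = ∫ x, Real.exp (-b * V x) ∂μ)
    (c : ℝ → ℝ) (hc : DifferentiableOn ℝ c (Set.Ioo 0 1))
    (β β' : ℝ) (hβ : β ∈ Set.Ioo (0 : ℝ) 1) (hβ' : β' ∈ Set.Ioo (0 : ℝ) 1)
    (hne : β ≠ β') :
    ∀ βc : ℝ, βc ∈ Set.Ioo (min β β') (max β β') →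
      deriv c βc = (c β' - c β) / (β' - β) →
      ((Z β)⁻¹ *
          ∫ x, Real.exp (-(max 0 ((β' - β) * V x - (c β' - c β)))) *
            Real.exp (-β * V x) ∂μ)
        = ((Z ((β + β') / 2))⁻¹ *
              ∫ x, Real.exp (-(|β' - β| * |deriv c βc - V x|) / 2) *
                Real.exp (-((β + β') / 2) * V x) ∂μ) /
          ((Z ((β + β') / 2))⁻¹ *
              ∫ x, Real.exp (-((β' - β) * (deriv c βc - V x)) / 2) *
                Real.exp (-((β + β') / 2) * V x) ∂μ) ∧
      ((Z β)⁻¹ *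
          ∫ x, Real.exp (-(max 0 ((β' - β) * V x - (c β' - c β)))) *
            Real.exp (-β * V x) ∂μ) ≤ 1 := by
  intro βc hβc hderiv
  set Δ := β' - β with hΔdef
  have hΔ : Δ ≠ 0 := sub_ne_zero.mpr (Ne.symm hne)
  set D := c β' - c β with hDdef
  have hD : Δ * deriv c βc = D := by
    rw [hderiv]; field_simp
  set b2 : ℝ := (β + β') / 2 with hb2
  have hβI : β ∈ Set.Icc (0:ℝ) 1 := ⟨le_of_lt hβ.1, le_of_lt hβ.2⟩
  have hb2I : b2 ∈ Set.Icc (0:ℝ) 1 := by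
    rw [hb2]
    constructor
    · nlinarith [hβ.1, hβ'.1]
    · nlinarith [hβ.2, hβ'.2]
  have hintβ := hint β hβI
  have hintb2 := hint b2 hb2I
  have hZβ : 0 < Z β := by
    rw [hZdef]
    exact integral_exp_pos hintβ
  have hZb2 : 0 < Z b2 := by
    rw [hZdef]
    exact integral_exp_pos hintb2
  -- pointwise identities
  have h1 : ∀ x, Real.exp (-(max 0 (Δ * V x - D))) * Real.exp (-β * V x)
      = Real.exp (D / 2) *
        (Real.exp (-(|Δ| * |deriv c βc - V x|) / 2) * Real.exp (-b2 * V x)) := by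
    intro x
    have habs : |Δ| * |deriv c βc - V x| = |Δ * V x - D| := by
      rw [← abs_mul]
      rw [abs_sub_comm (Δ * V x) D]
      congr 1
      rw [mul_sub, hD]
    have hmax : max 0 (Δ * V x - D) = ((Δ * V x - D) + |Δ * V x - D|) / 2 := by
      rcases le_or_gt 0 (Δ * V x - D) with h | h
      · rw [max_eq_right h, abs_of_nonneg h]; ring
      · rw [max_eq_left h.le, abs_of_neg h]; ring
    rw [habs, hmax, ← Real.exp_add, ← Real.exp_add, ← Real.exp_add]
    congr 1
    rw [hb2, hΔdef]
    ring
  have h2 : ∀ x, Real.exp (-(Δ * (deriv c βc - V x)) / 2) * Real.exp (-b2 * V x)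
      = Real.exp (-D / 2) * Real.exp (-β * V x) := by
    intro x
    rw [← Real.exp_add, ← Real.exp_add]
    congr 1
    have : Δ * (deriv c βc - V x) = D - Δ * V x := by rw [mul_sub, hD]
    rw [this, hb2, hΔdef]
    ring
  set N : ℝ := ∫ x, Real.exp (-(|Δ| * |deriv c βc - V x|) / 2) * Real.exp (-b2 * V x) ∂μ with hN
  have hA : (∫ x, Real.exp (-(max 0 (Δ * V x - D))) * Real.exp (-β * V x) ∂μ)
      = Real.exp (D / 2) * N := by
    rw [hN, ← integral_const_mul]
    exact integral_congr_ae (Filter.Eventually.of_forall h1)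
  have hB : (∫ x, Real.exp (-(Δ * (deriv c βc - V x)) / 2) * Real.exp (-b2 * V x) ∂μ)
      = Real.exp (-D / 2) * Z β := by
    rw [hZdef, ← integral_const_mul]
    exact integral_congr_ae (Filter.Eventually.of_forall h2)
  constructor
  · rw [hA, hB]
    have hNe1 : Z β ≠ 0 := ne_of_gt hZβ
    have hNe2 : Z b2 ≠ 0 := ne_of_gt hZb2
    have hexp : Real.exp (D / 2) * Real.exp (-D / 2) = 1 := by
      rw [← Real.exp_add]; rw [show D / 2 + -D / 2 = 0 by ring, Real.exp_zero]
    field_simp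
    rw [neg_div] at hexp
    linear_combination N * hexp
  · have hpt : ∀ x, Real.exp (-(max 0 (Δ * V x - D))) * Real.exp (-β * V x)
        ≤ Real.exp (-β * V x) := by
      intro x
      have h1 : Real.exp (-(max 0 (Δ * V x - D))) ≤ 1 := by
        rw [Real.exp_le_one_iff]
        simp [le_max_left]
      nlinarith [Real.exp_pos (-β * V x), Real.exp_pos (-(max 0 (Δ * V x - D)))]
    have hmeas : Measurable fun x => Real.exp (-(max 0 (Δ * V x - D))) * Real.exp (-β * V x) :=
      ((measurable_const.max ((measurable_const.mul hV).sub measurable_const)).neg.exp).mul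
        ((measurable_const.mul hV).exp)
    have hintF : Integrable (fun x => Real.exp (-(max 0 (Δ * V x - D))) * Real.exp (-β * V x)) μ := by
      refine hintβ.mono hmeas.aestronglyMeasurable ?_
      filter_upwards with x
      rw [Real.norm_eq_abs, Real.norm_eq_abs, abs_of_pos (by positivity),
        abs_of_pos (Real.exp_pos _)]
      exact hpt x
    have hle : (∫ x, Real.exp (-(max 0 (Δ * V x - D))) * Real.exp (-β * V x) ∂μ) ≤ Z β := by
      rw [hZdef]
      exact integral_mono hintF hintβ hpt
    rw [inv_mul_le_iff₀ hZβ, mul_one]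
    exact hle
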